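/- Let n ≥ 3 be an integer and write n = 2^k m with k ≥ 0 and m odd. Then the independence number of the prime-coprime graph of the semidihedral group SD_{8n} of order 8n equals 6n − 2m. -/

import Mathlib

/-- The prime-coprime graph: distinct vertices `g, h` are adjacent iff
`gcd (orderOf g) (orderOf h)` is `1` or a prime. -/
def primeCoprimeGraph (G : Type*) [Monoid G] : SimpleGraph G where
  Adj g h := g ≠ h ∧
    (Nat.gcd (orderOf g) (orderOf h) = 1 ∨ (Nat.gcd (orderOf g) (orderOf h)).Prime)
  symm := by
    constructor
    rintro g h ⟨hne, hd⟩
    exact ⟨hne.symm, by rwa [Nat.gcd_comm]⟩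
  loopless := by constructor; rintro g ⟨hne, -⟩; exact hne rfl

/-- A set of vertices is independent if no two of its elements are adjacent. -/
def IsIndepSet {V : Type*} (Γ : SimpleGraph V) (s : Set V) : Prop :=
  s.Pairwise fun a b => ¬ Γ.Adj a b

open scoped Classical in
/-- The independence number of a graph on a finite vertex set. -/
noncomputable def indepNum {V : Type*} [Fintype V] (Γ : SimpleGraph V) : ℕ :=
  Finset.univ.sup fun s : Finset V => if IsIndepSet Γ (s : Set V) then s.card else 0

/-- A graph is split if its vertex set can be partitioned into two disjoint nonempty
subsets, one a clique and the other an independent set. -/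
def IsSplit {V : Type*} (Γ : SimpleGraph V) : Prop :=
  ∃ K I : Set V, K.Nonempty ∧ I.Nonempty ∧ Disjoint K I ∧ K ∪ I = Set.univ ∧
    Γ.IsClique K ∧ IsIndepSet Γ I

open Finset

lemma count_multiples (c t : ℕ) (hc : 0 < c) :
    ((range (c * t)).filter (fun i => c ∣ i)).card = t := by
  have : (range (c * t)).filter (fun i => c ∣ i) = (range t).image (fun j => c * j) := by
    ext i
    simp only [mem_filter, mem_range, mem_image]
    constructor
    · rintro ⟨hlt, j, rfl⟩
      exact ⟨j, lt_of_mul_lt_mul_left hlt (Nat.zero_le c), rfl⟩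
    · rintro ⟨j, hj, rfl⟩
      exact ⟨(Nat.mul_lt_mul_left hc).mpr hj, ⟨j, rfl⟩⟩
  rw [this, card_image_of_injective _ (fun x y h => Nat.eq_of_mul_eq_mul_left hc h), card_range]

lemma count_not_dvd (c t : ℕ) (hc : 0 < c) :
    ((range (c * t)).filter (fun i => ¬ c ∣ i)).card = c * t - t := by
  have h := card_filter_add_card_filter_not (s := range (c*t)) (p := fun i => c ∣ i)
  rw [count_multiples c t hc, card_range] at h
  omega

lemma dvd4_cases (d : ℕ) (hd : d ∣ 4) : d = 1 ∨ d = 2 ∨ d = 4 := by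
  have := Nat.le_of_dvd (by norm_num) hd
  interval_cases d <;> revert hd <;> decide

lemma four_dvd_iff (k m d : ℕ) (hm : Odd m) (hd : d ∣ 2 ^ (k + 2) * m) :
    4 ∣ d ↔ ¬ d ∣ 2 * m := by
  obtain ⟨r, hr⟩ := hm
  constructor
  · rintro h4 hdm
    obtain ⟨t, ht⟩ := h4.trans hdm
    omega
  · intro hndm
    by_contra h4
    apply hndm
    have hmpos : 0 < 2 ^ (k + 2) * m := by
      have h0 : 0 < m := by omega
      exact Nat.mul_pos (pow_pos (by omega) _) h0
    have hdpos : 0 < d := Nat.pos_of_dvd_of_pos hd hmpos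
    set v := d.factorization 2 with hv
    set e := ordCompl[2] d with he
    have hde : d = 2 ^ v * e := (Nat.ordProj_mul_ordCompl_eq_self d 2).symm
    have hv1 : v ≤ 1 := by
      by_contra hv2
      have h2v : (4:ℕ) ∣ 2 ^ v := by
        have : (2:ℕ)^2 ∣ 2 ^ v := pow_dvd_pow 2 (by omega)
        simpa using this
      exact h4 (hde ▸ h2v.mul_right e)
    have hecop : Nat.Coprime 2 e := Nat.coprime_ordCompl Nat.prime_two hdpos.ne'
    have hedvd : e ∣ 2 ^ (k + 2) * m := (Nat.ordCompl_dvd d 2).trans hd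
    have hem : e ∣ m := (Nat.Coprime.pow_right _ hecop.symm).dvd_of_dvd_mul_left hedvd
    calc d = 2 ^ v * e := hde
    _ ∣ 2 * m := Nat.mul_dvd_mul (by
        calc (2:ℕ) ^ v ∣ 2 ^ 1 := pow_dvd_pow 2 hv1
        _ = 2 := pow_one 2) hem

theorem indepNum_semidihedral (n k m : ℕ) (hn : 3 ≤ n) (hm : Odd m)
    (hnkm : n = 2 ^ k * m) (G : Type*) [Group G] [Fintype G] (a b : G)
    (hcard : Fintype.card G = 8 * n)
    (hgen : Subgroup.closure {a, b} = ⊤)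
    (ha : a ^ (4 * n) = 1) (hb : b ^ 2 = 1)
    (hrel : b * a * b⁻¹ = a ^ (2 * n - 1)) :
    indepNum (primeCoprimeGraph G) = 6 * n - 2 * m := by
  classical
  have hm1 : 0 < m := hm.pos
  have hmn : m ≤ n := by
    have h1 : 1 ≤ 2 ^ k := Nat.one_le_two_pow
    calc m = 1 * m := (one_mul m).symm
    _ ≤ 2 ^ k * m := Nat.mul_le_mul_right m h1
    _ = n := hnkm.symm
  have hn0 : 0 < n := by omega
  set H := Subgroup.zpowers a with hHdef
  have hbb : b * b = 1 := by rw [← pow_two]; exact hb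
  have hbinv : b⁻¹ = b := inv_eq_of_mul_eq_one_right hbb
  have hconjH : ∀ g ∈ H, b * g * b⁻¹ ∈ H := by
    intro g hg
    obtain ⟨i, rfl⟩ := Subgroup.mem_zpowers_iff.mp hg
    rw [← conj_zpow, hrel]
    exact H.zpow_mem (H.pow_mem (Subgroup.mem_zpowers a) _) i
  have hconjH' : ∀ g ∈ H, b * g * b ∈ H := by
    intro g hg
    have := hconjH g hg
    rwa [hbinv] at this
  -- every element is in H or in the coset H b
  have hUtop : ∀ g : G, g ∈ H ∨ g * b ∈ H := by
    set U : Subgroup G :=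
      { carrier := {g | g ∈ H ∨ g * b ∈ H}
        one_mem' := Or.inl H.one_mem
        mul_mem' := by
          rintro x y (hx | hx) (hy | hy)
          · exact Or.inl (H.mul_mem hx hy)
          · refine Or.inr ?_
            rw [mul_assoc]
            exact H.mul_mem hx hy
          · refine Or.inr ?_
            have h2 : b * y * b ∈ H := hconjH' y hy
            have heq : x * y * b = (x * b) * (b * y * b) := by
              rw [show (x * b) * (b * y * b) = x * (b * b) * (y * b) by group, hbb, mul_one, mul_assoc]
            rw [heq]
            exact H.mul_mem hx h2
          · refine Or.inl ?_
            have h2 : b * (y * b) * b ∈ H := hconjH' _ hy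
            have heq : x * y = (x * b) * (b * (y * b) * b) := by
              rw [show (x * b) * (b * (y * b) * b) = x * (b * b) * (y * (b * b)) by group, hbb,
                mul_one, mul_one]
            rw [heq]
            exact H.mul_mem hx h2
        inv_mem' := by
          rintro x (hx | hx)
          · exact Or.inl (H.inv_mem hx)
          · refine Or.inr ?_
            have h2 := hconjH' _ (H.inv_mem hx)
            have heq : b * (x * b)⁻¹ * b = x⁻¹ * b := by
              rw [show b * (x * b)⁻¹ * b = (b * b⁻¹) * (x⁻¹ * b) by group, mul_inv_cancel,
                one_mul]
            rwa [heq] at h2 }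
    intro g
    have hab : Subgroup.closure {a, b} ≤ U := by
      rw [Subgroup.closure_le]
      rintro x hx
      simp only [Set.mem_insert_iff, Set.mem_singleton_iff] at hx
      rcases hx with h | h
      · rw [h]; exact Or.inl (Subgroup.mem_zpowers a)
      · rw [h]; exact Or.inr (hbb ▸ H.one_mem)
    exact hab (hgen ▸ Subgroup.mem_top g)
  have hordadvd : orderOf a ∣ 4 * n := orderOf_dvd_of_pow_eq_one ha
  have hbnotH : b ∉ H := by
    intro hbH
    have hall : ∀ g : G, g ∈ H := by
      intro g
      rcases hUtop g with h | h
      · exact h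
      · have := H.mul_mem h (H.inv_mem hbH)
        rwa [mul_assoc, mul_inv_cancel, mul_one] at this
    have hHtop : H = ⊤ := Subgroup.eq_top_iff' H |>.mpr hall
    have h8n : orderOf a = 8 * n := by
      rw [← Nat.card_zpowers, ← hHdef, hHtop, Subgroup.card_top, Nat.card_eq_fintype_card, hcard]
    have := Nat.le_of_dvd (by omega) hordadvd
    omega
  have hswap : ∀ g : G, g ∈ H ↔ g * b ∉ H := by
    intro g
    constructor
    · intro hg hgb
      have := H.mul_mem (H.inv_mem hg) hgb
      rw [← mul_assoc, inv_mul_cancel, one_mul] at this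
      exact hbnotH this
    · intro hgb
      rcases hUtop g with h | h
      · exact h
      · exact absurd h hgb
  -- cardinality of H
  have hsum : (univ.filter (fun g : G => g ∈ H)).card
      + (univ.filter (fun g : G => ¬ g ∈ H)).card = 8 * n := by
    rw [card_filter_add_card_filter_not, card_univ, hcard]
  have hKH : (univ.filter (fun g : G => ¬ g ∈ H)).card
      = (univ.filter (fun g : G => g ∈ H)).card := by
    apply card_bij (fun g _ => g * b)
    · intro g hg
      simp only [mem_filter, mem_univ, true_and] at hg ⊢
      rcases hUtop g with h | h
      · exact absurd h hg
      · exact h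
    · intro x hx y hy hxy
      exact mul_right_cancel hxy
    · intro g hg
      simp only [mem_filter, mem_univ, true_and] at hg
      refine ⟨g * b, ?_, ?_⟩
      · simp only [mem_filter, mem_univ, true_and]
        exact (hswap g).mp hg
      · rw [mul_assoc, hbb, mul_one]
  have hHF : (univ.filter (fun g : G => g ∈ H)).card = 4 * n := by omega
  have horda : orderOf a = 4 * n := by
    rw [← Fintype.card_zpowers]
    rw [Fintype.card_subtype]
    exact hHF
  have hexp : ∀ g ∈ H, ∃ i, i < 4 * n ∧ g = a ^ i := by
    intro g hg
    obtain ⟨i, hi⟩ := Submonoid.mem_powers_iff g a |>.mp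
      (mem_powers_iff_mem_zpowers.mpr hg)
    refine ⟨i % (4 * n), Nat.mod_lt _ (by omega), ?_⟩
    rw [← horda, pow_mod_orderOf, hi]
  have hainj : ∀ i j : ℕ, i < 4 * n → j < 4 * n → a ^ i = a ^ j → i = j := by
    intro i j hi hj hij
    rwa [pow_inj_mod, horda, Nat.mod_eq_of_lt hi, Nat.mod_eq_of_lt hj] at hij
  have hanotH : ∀ i : ℕ, a ^ i * b ∉ H := by
    intro i hmem
    have := H.mul_mem (H.inv_mem (H.pow_mem (Subgroup.mem_zpowers a) i)) hmem
    rw [← mul_assoc, inv_mul_cancel, one_mul] at this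
    exact hbnotH this
  -- square of coset elements
  have hconjNat : ∀ i : ℕ, b * a ^ i * b⁻¹ = a ^ ((2*n-1) * i) := by
    intro i
    rw [← conj_pow, hrel, ← pow_mul]
  have hsq : ∀ i : ℕ, (a ^ i * b) ^ 2 = a ^ (2 * n * i) := by
    intro i
    have h1 := hconjNat i
    calc (a ^ i * b) ^ 2 = a ^ i * (b * a ^ i * b⁻¹) * (b⁻¹)⁻¹ * b := by
          rw [pow_two]; group
    _ = a ^ i * a ^ ((2*n-1)*i) * b * b := by rw [h1, inv_inv]
    _ = a ^ (i + (2*n-1)*i) * (b * b) := by rw [pow_add]; group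
    _ = a ^ (2*n*i) := by
        rw [hbb, mul_one]
        congr 1
        have h2 : 2*n - 1 + 1 = 2*n := by omega
        calc i + (2*n-1)*i = (2*n-1+1)*i := by ring
        _ = 2*n*i := by rw [h2]
  have ha2n : a ^ (2*n) ≠ 1 := by
    intro h
    have := Nat.le_of_dvd (by omega) (horda ▸ orderOf_dvd_of_pow_eq_one h)
    omega
  have hordK2 : ∀ i : ℕ, 2 ∣ i → orderOf (a ^ i * b) = 2 := by
    rintro i ⟨j, rfl⟩
    have hsq' : (a ^ (2*j) * b) ^ 2 = 1 := by
      rw [hsq, show 2*n*(2*j) = 4*n*j by ring, pow_mul, ha, one_pow]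
    have hne : a ^ (2*j) * b ≠ 1 := by
      intro h
      exact hanotH (2*j) (h ▸ H.one_mem)
    have hdvd : orderOf (a ^ (2*j) * b) ∣ 2 := orderOf_dvd_of_pow_eq_one hsq'
    rcases (Nat.dvd_prime Nat.prime_two).mp hdvd with h | h
    · exact absurd (orderOf_eq_one_iff.mp h) hne
    · exact h
  have hordK4 : ∀ i : ℕ, ¬ 2 ∣ i → orderOf (a ^ i * b) = 4 := by
    intro i hi
    obtain ⟨j, rfl⟩ : ∃ j, i = 2*j+1 := ⟨i/2, by omega⟩
    have hsq' : (a ^ (2*j+1) * b) ^ 2 = a ^ (2*n) := by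
      rw [hsq, show 2*n*(2*j+1) = 4*n*j + 2*n by ring, pow_add, pow_mul, ha, one_pow, one_mul]
    have h4 : (a ^ (2*j+1) * b) ^ 4 = 1 := by
      rw [show (4:ℕ) = 2*2 by rfl, pow_mul, hsq', ← pow_mul, show 2*n*2 = 4*n by ring, ha]
    have hdvd : orderOf (a ^ (2*j+1) * b) ∣ 4 := orderOf_dvd_of_pow_eq_one h4
    have hne2 : (a ^ (2*j+1) * b) ^ 2 ≠ 1 := by rw [hsq']; exact ha2n
    have hne1 : (a ^ (2*j+1) * b) ≠ 1 := by
      intro h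
      exact hne2 (by rw [h, one_pow])
    rcases dvd4_cases _ hdvd with h | h | h
    · exact absurd (orderOf_eq_one_iff.mp h) hne1
    · have := pow_orderOf_eq_one (a ^ (2*j+1) * b)
      rw [h] at this
      exact absurd this hne2
    · exact h
  have hordKstruct : ∀ g : G, g ∉ H → orderOf g = 2 ∨ orderOf g = 4 := by
    intro g hg
    have hgb : g * b ∈ H := by
      rcases hUtop g with h | h
      · exact absurd h hg
      · exact h
    obtain ⟨i, _, hgbi⟩ := hexp _ hgb
    have hgi : g = a ^ i * b := by
      rw [← hgbi, mul_assoc, hbb, mul_one]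
    by_cases h2 : 2 ∣ i
    · exact Or.inl (hgi ▸ hordK2 i h2)
    · exact Or.inr (hgi ▸ hordK4 i h2)
  -- orders in H
  have h4n : 4 * n = 2 ^ (k+2) * m := by rw [hnkm]; ring
  have hordH4 : ∀ i : ℕ, 4 ∣ orderOf (a ^ i) ↔ ¬ 2 ^ (k+1) ∣ i := by
    intro i
    have hd : orderOf (a ^ i) ∣ 4 * n := by
      apply orderOf_dvd_of_pow_eq_one
      rw [← pow_mul, mul_comm, pow_mul, ha, one_pow]
    rw [four_dvd_iff k m _ hm (h4n ▸ hd)]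
    apply not_congr
    rw [orderOf_dvd_iff_pow_eq_one, ← pow_mul, ← orderOf_dvd_iff_pow_eq_one, horda,
      show 4 * n = 2*m*2^(k+1) by rw [hnkm]; ring, show i * (2*m) = 2*m*i by ring]
    exact Nat.mul_dvd_mul_iff_left (by omega)
  -- the independent set: elements of order divisible by 4
  have hSH : (univ.filter (fun g : G => 4 ∣ orderOf g ∧ g ∈ H)).card = 4*n - 2*m := by
    have h1 : (univ.filter (fun g : G => 4 ∣ orderOf g ∧ g ∈ H)).card
        = ((range (4*n)).filter (fun i => ¬ 2 ^ (k+1) ∣ i)).card := by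
      refine (card_bij (fun i _ => a ^ i) ?_ ?_ ?_).symm
      · intro i hi
        simp only [mem_filter, mem_range] at hi
        simp only [mem_filter, mem_univ, true_and]
        exact ⟨(hordH4 i).mpr hi.2, H.pow_mem (Subgroup.mem_zpowers a) i⟩
      · intro i hi j hj hij
        simp only [mem_filter, mem_range] at hi hj
        exact hainj i j hi.1 hj.1 hij
      · intro g hg
        simp only [mem_filter, mem_univ, true_and] at hg
        obtain ⟨i, hi, rfl⟩ := hexp g hg.2
        refine ⟨i, ?_, rfl⟩
        simp only [mem_filter, mem_range]
        exact ⟨hi, (hordH4 i).mp hg.1⟩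
    rw [h1, show 4*n = 2 ^ (k+1) * (2*m) by rw [hnkm]; ring,
      count_not_dvd _ _ (pow_pos (by omega) _),
      show 2 ^ (k+1) * (2*m) = 4*n by rw [hnkm]; ring]
  have hSK : (univ.filter (fun g : G => 4 ∣ orderOf g ∧ ¬ g ∈ H)).card = 2*n := by
    have h1 : (univ.filter (fun g : G => 4 ∣ orderOf g ∧ ¬ g ∈ H)).card
        = ((range (4*n)).filter (fun i => ¬ 2 ∣ i)).card := by
      refine (card_bij (fun i _ => a ^ i * b) ?_ ?_ ?_).symm
      · intro i hi
        simp only [mem_filter, mem_range] at hi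
        simp only [mem_filter, mem_univ, true_and]
        exact ⟨by rw [hordK4 i hi.2], hanotH i⟩
      · intro i hi j hj hij
        simp only [mem_filter, mem_range] at hi hj
        exact hainj i j hi.1 hj.1 (mul_right_cancel hij)
      · intro g hg
        simp only [mem_filter, mem_univ, true_and] at hg
        have hgb : g * b ∈ H := by
          rcases hUtop g with h | h
          · exact absurd h hg.2
          · exact h
        obtain ⟨i, hi, hgbi⟩ := hexp _ hgb
        have hg' : g = a ^ i * b := by
          rw [← hgbi, mul_assoc, hbb, mul_one]
        subst hg'
        refine ⟨i, ?_, rfl⟩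
        simp only [mem_filter, mem_range]
        refine ⟨hi, ?_⟩
        intro h2
        rw [hordK2 i h2] at hg
        omega
    rw [h1, show 4*n = 2 * (2*n) by ring, count_not_dvd _ _ (by omega)]
    omega
  have hScard : (univ.filter (fun g : G => 4 ∣ orderOf g)).card = 6*n - 2*m := by
    have hsplit := card_filter_add_card_filter_not
      (s := univ.filter (fun g : G => 4 ∣ orderOf g)) (p := fun g => g ∈ H)
    rw [filter_filter, filter_filter] at hsplit
    rw [hSH, hSK] at hsplit
    omega
  -- independence of the set
  have hSind : IsIndepSet (primeCoprimeGraph G)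
      ((univ.filter (fun g : G => 4 ∣ orderOf g)) : Set G) := by
    intro g hg h hh hne hadj
    obtain ⟨-, hgcd⟩ := hadj
    have h4g : 4 ∣ orderOf g := (mem_filter.mp (mem_coe.mp hg)).2
    have h4h : 4 ∣ orderOf h := (mem_filter.mp (mem_coe.mp hh)).2
    have h4 : 4 ∣ Nat.gcd (orderOf g) (orderOf h) := Nat.dvd_gcd h4g h4h
    rcases hgcd with h1 | hp
    · rw [h1] at h4
      omega
    · rcases hp.eq_one_or_self_of_dvd 4 h4 with h | h
      · omega
      · rw [← h] at hp
        norm_num at hp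
  -- upper bound
  have hupper : ∀ s : Finset G, IsIndepSet (primeCoprimeGraph G) (s : Set G)
      → s.card ≤ 6*n - 2*m := by
    intro s hs
    by_cases hcard1 : s.card ≤ 1
    · omega
    push_neg at hcard1
    have hord_ge : ∀ g ∈ s, orderOf g ≠ 1 ∧ orderOf g ≠ 2 := by
      intro g hg
      obtain ⟨h, hh, hgh⟩ := exists_mem_ne hcard1 g
      have hadj : ¬ (primeCoprimeGraph G).Adj g h :=
        hs (mem_coe.mpr hg) (mem_coe.mpr hh) (Ne.symm hgh)
      constructor
      · intro h1
        exact hadj ⟨Ne.symm hgh, Or.inl (by rw [h1, Nat.gcd_one_left])⟩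
      · intro h2
        apply hadj
        refine ⟨Ne.symm hgh, ?_⟩
        rw [h2]
        rcases (Nat.dvd_prime Nat.prime_two).mp (Nat.gcd_dvd_left 2 (orderOf h)) with h | h
        · exact Or.inl h
        · exact Or.inr (by rw [h]; exact Nat.prime_two)
    by_cases hall : ∀ g ∈ s, 4 ∣ orderOf g
    · have hsub : s ⊆ univ.filter (fun g : G => 4 ∣ orderOf g) :=
        fun g hg => mem_filter.mpr ⟨mem_univ g, hall g hg⟩
      calc s.card ≤ _ := card_le_card hsub
      _ = 6*n - 2*m := hScard
    · push_neg at hall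
      obtain ⟨x, hxs, hx4⟩ := hall
      have hsubH : ∀ g ∈ s, g ∈ H := by
        intro g hg
        by_contra hgH
        rcases hordKstruct g hgH with h2 | h4
        · exact (hord_ge g hg).2 h2
        · have hgx : g ≠ x := by
            rintro rfl
            exact hx4 (by rw [h4])
          have hadj : ¬ (primeCoprimeGraph G).Adj x g :=
            hs (mem_coe.mpr hxs) (mem_coe.mpr hg) (Ne.symm hgx)
          apply hadj
          refine ⟨Ne.symm hgx, ?_⟩
          rw [h4]
          rcases dvd4_cases _ (Nat.gcd_dvd_right (orderOf x) 4) with h | h | h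
          · exact Or.inl h
          · exact Or.inr (h ▸ Nat.prime_two)
          · exact absurd (h ▸ Nat.gcd_dvd_left (orderOf x) 4) hx4
      calc s.card ≤ (univ.filter (fun g : G => g ∈ H)).card :=
        card_le_card (fun g hg => mem_filter.mpr ⟨mem_univ g, hsubH g hg⟩)
      _ = 4*n := hHF
      _ ≤ 6*n - 2*m := by omega
  -- conclude
  apply le_antisymm
  · apply Finset.sup_le
    intro s _
    split_ifs with h
    · exact hupper s h
    · exact Nat.zero_le _
  · have hle := Finset.le_sup
      (f := fun s : Finset G => if IsIndepSet (primeCoprimeGraph G) (s : Set G) then s.card else 0)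
      (mem_univ (univ.filter (fun g : G => 4 ∣ orderOf g)))
    simp only [if_pos hSind] at hle
    rw [hScard] at hle
    exact hle
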